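/- arXiv:1710.03154 — 4 statements merged into one kernel-verified Lean document; each statement's English description precedes it below -/
import Mathlib

section
/- Let n, k be positive integers, let L be a real symmetric positive semidefinite n×n matrix, let L⁺ be an n×n real matrix satisfying the Moore–Penrose conditions L·L⁺·L = L, L⁺·L·L⁺ = L⁺, (L·L⁺)ᵀ = L·L⁺, (L⁺·L)ᵀ = L⁺·L, and let E be a real n×k matrix whose columns lie in the range of L, i.e., L·L⁺·E = E. Then for every real γ > 0, the matrix γ·L − E·Eᵀ is positive semidefinite if and only if the k×k matrix γ·I_k − Eᵀ·L⁺·E is positive semidefinite. -/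
open Matrix

theorem psd_cauchy_schwarz {m : ℕ} (M : Matrix (Fin m) (Fin m) ℝ) (hsym : Mᵀ = M)
    (hpsd : ∀ x, 0 ≤ x ⬝ᵥ M *ᵥ x) (u v : Fin m → ℝ) :
    (u ⬝ᵥ M *ᵥ v)^2 ≤ (u ⬝ᵥ M *ᵥ u) * (v ⬝ᵥ M *ᵥ v) := by
  have hswap : v ⬝ᵥ M *ᵥ u = u ⬝ᵥ M *ᵥ v := by
    rw [dotProduct_mulVec, ← mulVec_transpose, hsym, dotProduct_comm]
  have key : ∀ t : ℝ, 0 ≤ (v ⬝ᵥ M *ᵥ v) * (t*t) + (2*(u ⬝ᵥ M *ᵥ v)) * t + (u ⬝ᵥ M *ᵥ u) := by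
    intro t
    have h := hpsd (u + t • v)
    simp only [Matrix.mulVec_add, Matrix.mulVec_smul, dotProduct_add, add_dotProduct,
      dotProduct_smul, smul_dotProduct, smul_eq_mul] at h
    rw [hswap] at h
    ring_nf at h ⊢
    linarith
  have := discrim_le_zero key
  rw [discrim] at this
  nlinarith [this]

theorem hdot_aux {p q : ℕ} (A : Matrix (Fin p) (Fin q) ℝ) (u : Fin p → ℝ) (w : Fin q → ℝ) :
    u ⬝ᵥ A *ᵥ w = (Aᵀ *ᵥ u) ⬝ᵥ w := by
  rw [dotProduct_mulVec, mulVec_transpose]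

/-- For `L` symmetric PSD with Moore–Penrose pseudoinverse `Lp`, and `E` whose
columns lie in the range of `L` (i.e. `L·Lp·E = E`), for every `γ > 0`:
`γ·L − E·Eᵀ ⪰ 0` iff `γ·I_k − Eᵀ·Lp·E ⪰ 0`. -/
theorem schur_iff_pseudoinverse_LMI {n k : ℕ} (hn : 0 < n) (hk : 0 < k)
    (L : Matrix (Fin n) (Fin n) ℝ) (hL : L.PosSemidef)
    (Lp : Matrix (Fin n) (Fin n) ℝ)
    (h1 : L * Lp * L = L) (h2 : Lp * L * Lp = Lp)
    (h3 : (L * Lp)ᵀ = L * Lp) (h4 : (Lp * L)ᵀ = Lp * L)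
    (E : Matrix (Fin n) (Fin k) ℝ) (hE : L * Lp * E = E) :
    ∀ γ : ℝ, 0 < γ →
      ((γ • L - E * Eᵀ).PosSemidef ↔
        (γ • (1 : Matrix (Fin k) (Fin k) ℝ) - Eᵀ * Lp * E).PosSemidef) := by
  intro γ hγ
  have hLsym : Lᵀ = L := by have h0 := hL.1; simp at h0; exact h0.eq
  -- symmetry of Lp
  have a1 : L * Lpᵀ = Lp * L := by rw [← h4, transpose_mul, hLsym]
  have a2 : Lpᵀ * L = L * Lp := by rw [← h3, transpose_mul, hLsym]
  have key : L * Lpᵀ = L * Lp := by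
    calc L * Lpᵀ = (L*Lp*L)*Lpᵀ := by rw [h1]
    _ = (L*Lp)*(L*Lpᵀ) := by rw [mul_assoc]
    _ = (Lpᵀ*L)*(Lp*L) := by rw [a2, a1]
    _ = Lpᵀ*(L*Lp*L) := by rw [mul_assoc, ← mul_assoc L Lp L]
    _ = Lpᵀ*L := by rw [h1]
    _ = L*Lp := a2
  have hcomm : Lpᵀ * L = Lp * L := by rw [a2, ← key, a1]
  have hLpT : Lpᵀ = Lp := by
    have hA : Lpᵀ = Lpᵀ * L * Lpᵀ := by
      have h5 := congrArg Matrix.transpose h2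
      rw [transpose_mul, transpose_mul, hLsym] at h5
      rw [← mul_assoc] at h5
      exact h5.symm
    calc Lpᵀ = Lpᵀ * L * Lpᵀ := hA
    _ = (Lp*L)*Lpᵀ := by rw [hcomm]
    _ = Lp*(L*Lpᵀ) := by rw [mul_assoc]
    _ = Lp*(L*Lp) := by rw [key]
    _ = Lp := by rw [← mul_assoc]; exact h2
  set S := Eᵀ * Lp * E with hS
  have hSsym : Sᵀ = S := by
    rw [hS, transpose_mul, transpose_mul, transpose_transpose, hLpT, ← Matrix.mul_assoc]
  -- quadratic form facts
  have hdotself : ∀ {p : ℕ} (w : Fin p → ℝ), 0 ≤ w ⬝ᵥ w :=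
    fun w => Finset.sum_nonneg fun i _ => mul_self_nonneg _
  have hLq : ∀ x, 0 ≤ x ⬝ᵥ L *ᵥ x := fun x => by simpa using hL.dotProduct_mulVec_nonneg x
  have hLpq : ∀ x, 0 ≤ x ⬝ᵥ Lp *ᵥ x := by
    intro x
    have e : x ⬝ᵥ Lp *ᵥ x = (Lp *ᵥ x) ⬝ᵥ L *ᵥ (Lp *ᵥ x) := by
      conv_lhs => rw [← h2]
      rw [← mulVec_mulVec, ← mulVec_mulVec, hdot_aux, hLpT]
    rw [e]; exact hLq _
  have hSform : ∀ v, v ⬝ᵥ S *ᵥ v = (E *ᵥ v) ⬝ᵥ Lp *ᵥ (E *ᵥ v) := by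
    intro v
    rw [hS, ← mulVec_mulVec, ← mulVec_mulVec, hdot_aux, transpose_transpose]
  have hSq : ∀ v, 0 ≤ v ⬝ᵥ S *ᵥ v := fun v => by rw [hSform]; exact hLpq _
  -- quadratic form of the two LMI matrices
  have qform1 : ∀ x, x ⬝ᵥ (γ • L - E * Eᵀ) *ᵥ x
      = γ * (x ⬝ᵥ L *ᵥ x) - (Eᵀ *ᵥ x) ⬝ᵥ (Eᵀ *ᵥ x) := by
    intro x
    rw [sub_mulVec, dotProduct_sub, smul_mulVec, dotProduct_smul, smul_eq_mul]
    congr 1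
    rw [← mulVec_mulVec, hdot_aux]
  have qform2 : ∀ v, v ⬝ᵥ (γ • (1 : Matrix (Fin k) (Fin k) ℝ) - S) *ᵥ v
      = γ * (v ⬝ᵥ v) - v ⬝ᵥ S *ᵥ v := by
    intro v
    rw [sub_mulVec, dotProduct_sub, smul_mulVec, dotProduct_smul, smul_eq_mul, one_mulVec]
  -- hermitian parts
  have herm1 : (γ • L - E * Eᵀ).IsHermitian := by
    show _ᴴ = _
    simp [conjTranspose_sub, conjTranspose_smul, conjTranspose_mul,
      Matrix.conjTranspose_eq_transpose_of_trivial, hLsym]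
  have herm2 : (γ • (1 : Matrix (Fin k) (Fin k) ℝ) - S).IsHermitian := by
    show _ᴴ = _
    simp [conjTranspose_sub, conjTranspose_smul,
      Matrix.conjTranspose_eq_transpose_of_trivial, hSsym]
  constructor
  · intro hP; obtain ⟨_, hq⟩ := posSemidef_iff_dotProduct_mulVec.mp hP
    refine posSemidef_iff_dotProduct_mulVec.mpr ⟨herm2, fun v => ?_⟩
    rw [show star v = v from rfl, qform2]
    set w := Lp *ᵥ (E *ᵥ v) with hw
    have e1 : Eᵀ *ᵥ w = S *ᵥ v := by
      rw [hw, hS, mulVec_mulVec, mulVec_mulVec]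
    have e2 : w ⬝ᵥ L *ᵥ w = v ⬝ᵥ S *ᵥ v := by
      rw [hSform]
      have : L *ᵥ w = E *ᵥ v := by rw [hw, mulVec_mulVec, mulVec_mulVec, hE]
      rw [this, hw, dotProduct_comm]
    have h := hq w
    rw [show star w = w from rfl, qform1, e1, e2] at h
    have hcs := psd_cauchy_schwarz (1 : Matrix (Fin k) (Fin k) ℝ) transpose_one
      (fun x => by rw [one_mulVec]; exact hdotself x) v (S *ᵥ v)
    simp only [one_mulVec] at hcs
    have hs := hSq v
    have hnv := hdotself v
    rcases eq_or_lt_of_le hs with he | hpos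
    · rw [← he]
      nlinarith [mul_nonneg hγ.le hnv]
    · have h5 : (v ⬝ᵥ S *ᵥ v) * (v ⬝ᵥ S *ᵥ v) ≤ (γ * (v ⬝ᵥ v)) * (v ⬝ᵥ S *ᵥ v) := by
        nlinarith [mul_le_mul_of_nonneg_left (by linarith : (S *ᵥ v) ⬝ᵥ (S *ᵥ v) ≤ γ * (v ⬝ᵥ S *ᵥ v)) hnv]
      have := le_of_mul_le_mul_right h5 hpos
      linarith
  · intro hP; obtain ⟨_, hq⟩ := posSemidef_iff_dotProduct_mulVec.mp hP
    refine posSemidef_iff_dotProduct_mulVec.mpr ⟨herm1, fun x => ?_⟩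
    rw [show star x = x from rfl, qform1]
    set v := Eᵀ *ᵥ x with hv
    have hEsym : Eᵀ = Eᵀ * Lp * L := by
      conv_lhs => rw [← hE]
      rw [transpose_mul, transpose_mul, hLpT, hLsym, ← Matrix.mul_assoc]
    have e1 : v = Eᵀ *ᵥ (Lp *ᵥ (L *ᵥ x)) := by
      rw [hv]
      conv_lhs => rw [hEsym]
      rw [mulVec_mulVec, mulVec_mulVec]
    have e2 : v ⬝ᵥ v = (E *ᵥ v) ⬝ᵥ Lp *ᵥ (L *ᵥ x) := by
      conv_lhs => rw [e1]
      rw [hdot_aux, transpose_transpose, ← e1]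
    have e3 : (L *ᵥ x) ⬝ᵥ Lp *ᵥ (L *ᵥ x) = x ⬝ᵥ L *ᵥ x := by
      rw [mulVec_mulVec]
      have : (L *ᵥ x) ⬝ᵥ ((Lp * L) *ᵥ x) = x ⬝ᵥ L *ᵥ ((Lp * L) *ᵥ x) := by
        rw [hdot_aux L x, hLsym]
      rw [this, mulVec_mulVec, ← mul_assoc, h1]
    have hcs := psd_cauchy_schwarz Lp hLpT hLpq (E *ᵥ v) (L *ᵥ x)
    rw [← e2, e3, ← hSform] at hcs
    have hB := hq v
    rw [show star v = v from rfl, qform2] at hB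
    have ht := hdotself v
    have hx := hLq x
    rcases eq_or_lt_of_le ht with he | hpos
    · rw [← he]
      nlinarith [mul_nonneg hγ.le hx]
    · have h5 : (v ⬝ᵥ v) * (v ⬝ᵥ v) ≤ (γ * (x ⬝ᵥ L *ᵥ x)) * (v ⬝ᵥ v) := by
        nlinarith [mul_le_mul_of_nonneg_right (by linarith : v ⬝ᵥ S *ᵥ v ≤ γ * (v ⬝ᵥ v)) hx]
      have := le_of_mul_le_mul_right h5 hpos
      linarith
end

section
/- Let n ≥ 2 and let L be a real symmetric positive semidefinite n×n matrix with L·𝟙 = 0 whose kernel is exactly the span of 𝟙 (i.e., L·x = 0 implies x is a scalar multiple of 𝟙). Let L⁺ be an n×n real matrix satisfying L·L⁺·L = L, L⁺·L·L⁺ = L⁺, (L·L⁺)ᵀ = L·L⁺, (L⁺·L)ᵀ = L⁺·L. Let u ≠ v be two indices, let b = e_u − e_v, and let w > 0 be a real number. Then the matrix L − w·b·bᵀ is positive semidefinite if and only if w·(bᵀ·L⁺·b) ≤ 1, i.e., the magnitude w of the negative edge weight does not exceed the inverse of the effective resistance R_uv = bᵀ·L⁺·b between u and v. -/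
open Matrix

private lemma aux_dot {n : ℕ} (M : Matrix (Fin n) (Fin n) ℝ) (x y : Fin n → ℝ) :
    x ⬝ᵥ M *ᵥ y = (Mᵀ *ᵥ x) ⬝ᵥ y := by
  rw [dotProduct_mulVec, mulVec_transpose]

private lemma aux_symm {n : ℕ} {M : Matrix (Fin n) (Fin n) ℝ} (hM : Mᵀ = M)
    (x y : Fin n → ℝ) : y ⬝ᵥ M *ᵥ x = x ⬝ᵥ M *ᵥ y := by
  rw [aux_dot, hM, dotProduct_comm]

private lemma aux_quad {n : ℕ} {M : Matrix (Fin n) (Fin n) ℝ} (hM : M.PosSemidef)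
    (x : Fin n → ℝ) : 0 ≤ x ⬝ᵥ M *ᵥ x := by
  simpa using hM.dotProduct_mulVec_nonneg x

private lemma aux_cs {n : ℕ} {M : Matrix (Fin n) (Fin n) ℝ} (hM : M.PosSemidef)
    (x y : Fin n → ℝ) :
    (x ⬝ᵥ M *ᵥ y) ^ 2 ≤ (x ⬝ᵥ M *ᵥ x) * (y ⬝ᵥ M *ᵥ y) := by
  have hsym : Mᵀ = M := by
    have := hM.1.eq
    simpa [conjTranspose_eq_transpose_of_trivial] using this
  have hq : ∀ t : ℝ, 0 ≤ (y ⬝ᵥ M *ᵥ y) * (t * t) + (2 * (x ⬝ᵥ M *ᵥ y)) * t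
      + (x ⬝ᵥ M *ᵥ x) := by
    intro t
    have h0 := aux_quad hM (x + t • y)
    have hcross := aux_symm hsym x y
    simp only [mulVec_add, mulVec_smul, dotProduct_add, add_dotProduct,
      dotProduct_smul, smul_dotProduct, smul_eq_mul] at h0
    rw [hcross] at h0
    nlinarith [h0]
  have hd := discrim_le_zero hq
  rw [discrim] at hd
  nlinarith [hd]

private lemma aux_ker {n : ℕ} {M : Matrix (Fin n) (Fin n) ℝ} (hM : M.PosSemidef)
    (x : Fin n → ℝ) (hx : x ⬝ᵥ M *ᵥ x = 0) : M *ᵥ x = 0 := by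
  funext i
  have h := aux_cs hM (Pi.single i 1) x
  rw [hx, mul_zero] at h
  have h2 : Pi.single i (1 : ℝ) ⬝ᵥ M *ᵥ x = 0 := by
    have := sq_nonneg (Pi.single i (1 : ℝ) ⬝ᵥ M *ᵥ x)
    nlinarith
  simpa [dotProduct, Pi.single_apply] using h2

/-- Lemma 1 of the paper / Zelazo et al., Thm III.3: for a connected-graph
Laplacian `L` (symmetric PSD, `L·𝟙 = 0`, kernel exactly `span{𝟙}`) with Moore–Penrose
pseudoinverse `Lp`, indices `u ≠ v`, `b = e_u − e_v` and `w > 0`: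
`L − w·b·bᵀ ⪰ 0` iff `w·(bᵀ·Lp·b) ≤ 1`. -/
theorem negative_edge_psd_iff_effective_resistance {n : ℕ} (hn : 2 ≤ n)
    (L : Matrix (Fin n) (Fin n) ℝ) (hL : L.PosSemidef)
    (hL1 : L *ᵥ (fun _ => (1 : ℝ)) = 0)
    (hker : ∀ x : Fin n → ℝ, L *ᵥ x = 0 → ∃ c : ℝ, x = c • (fun _ => (1 : ℝ)))
    (Lp : Matrix (Fin n) (Fin n) ℝ)
    (h1 : L * Lp * L = L) (h2 : Lp * L * Lp = Lp)
    (h3 : (L * Lp)ᵀ = L * Lp) (h4 : (Lp * L)ᵀ = Lp * L)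
    (u v : Fin n) (huv : u ≠ v) (w : ℝ) (hw : 0 < w) :
    (L - w • vecMulVec (Pi.single u 1 - Pi.single v 1) (Pi.single u 1 - Pi.single v 1)).PosSemidef
      ↔ w * ((Pi.single u 1 - Pi.single v 1) ⬝ᵥ
              (Lp *ᵥ (Pi.single u 1 - Pi.single v 1))) ≤ 1 := by
  set b : Fin n → ℝ := Pi.single u 1 - Pi.single v 1 with hb
  have hLsym : Lᵀ = L := by
    have := hL.1.eq
    simpa [conjTranspose_eq_transpose_of_trivial] using this
  have hbne : b ≠ 0 := by
    intro h
    have := congrFun h u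
    simp [hb, Pi.single_apply, huv, Ne.symm huv] at this
  -- the all-ones vector is orthogonal to b
  have hone_b : (fun _ => (1 : ℝ)) ⬝ᵥ b = 0 := by
    simp [hb, dotProduct, Pi.single_apply, Finset.sum_sub_distrib, huv]
  -- quadratic form of the perturbed matrix
  have hquadform : ∀ x : Fin n → ℝ,
      x ⬝ᵥ (L - w • vecMulVec b b) *ᵥ x = x ⬝ᵥ L *ᵥ x - w * (b ⬝ᵥ x) ^ 2 := by
    intro x
    have hvmv : (vecMulVec b b) *ᵥ x = (b ⬝ᵥ x) • b := by
      funext i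
      simp only [vecMulVec_apply, mulVec, dotProduct, Pi.smul_apply, smul_eq_mul,
        Finset.sum_mul]
      exact Finset.sum_congr rfl fun j _ => by ring
    rw [sub_mulVec, dotProduct_sub, smul_mulVec, dotProduct_smul, hvmv,
      dotProduct_smul, smul_eq_mul, smul_eq_mul, dotProduct_comm x b]
    ring
  -- key fact : L * Lp *ᵥ b = b
  have hLLpb : L *ᵥ (Lp *ᵥ b) = b := by
    set z : Fin n → ℝ := b - (L * Lp) *ᵥ b with hz
    have hzorth : ∀ x : Fin n → ℝ, z ⬝ᵥ L *ᵥ x = 0 := by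
      intro x
      have hidem : (L * Lp) * (L * Lp) = L * Lp := by
        rw [← Matrix.mul_assoc, h1]
      have hLLpz : (L * Lp) *ᵥ z = 0 := by
        rw [hz, mulVec_sub, mulVec_mulVec, hidem, sub_self]
      calc z ⬝ᵥ L *ᵥ x = z ⬝ᵥ (L * Lp * L) *ᵥ x := by rw [h1]
        _ = z ⬝ᵥ (L * Lp) *ᵥ (L *ᵥ x) := by rw [← mulVec_mulVec]
        _ = ((L * Lp)ᵀ *ᵥ z) ⬝ᵥ (L *ᵥ x) := by rw [aux_dot]
        _ = ((L * Lp) *ᵥ z) ⬝ᵥ (L *ᵥ x) := by rw [h3]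
        _ = 0 := by rw [hLLpz, zero_dotProduct]
    have hzLz : z ⬝ᵥ L *ᵥ z = 0 := hzorth z
    have hLz : L *ᵥ z = 0 := aux_ker hL z hzLz
    obtain ⟨c, hc⟩ := hker z hLz
    -- z is orthogonal to ones
    have hz_one : (fun _ => (1 : ℝ)) ⬝ᵥ z = 0 := by
      have h1z : (fun _ => (1 : ℝ)) ⬝ᵥ ((L * Lp) *ᵥ b) = 0 := by
        rw [aux_dot]
        have : (L * Lp)ᵀ *ᵥ (fun _ => (1 : ℝ)) = 0 := by
          rw [transpose_mul, hLsym, ← mulVec_mulVec, hL1, mulVec_zero]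
        rw [this, zero_dotProduct]
      rw [hz, dotProduct_sub, hone_b, h1z, sub_zero]
    have hcn : (fun _ => (1 : ℝ)) ⬝ᵥ z = c * n := by
      rw [hc]
      simp [dotProduct, Finset.sum_const, mul_comm]
    have hc0 : c = 0 := by
      rw [hz_one] at hcn
      have hn0 : (0:ℝ) < n := by
        have : 0 < n := by omega
        exact_mod_cast this
      rcases mul_eq_zero.mp hcn.symm with h | h
      · exact h
      · exact absurd h (by positivity)
    have hz0 : z = 0 := by
      rw [hc, hc0]
      funext i
      simp
    have : (L * Lp) *ᵥ b = b := by
      have h' : b - (L * Lp) *ᵥ b = 0 := hz ▸ hz0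
      have := sub_eq_zero.mp h'
      exact this.symm
    rw [← mulVec_mulVec] at this
    exact this
  set r : ℝ := b ⬝ᵥ (Lp *ᵥ b) with hr
  -- r = quadratic form of y₀ := Lp b
  have hy0 : (Lp *ᵥ b) ⬝ᵥ L *ᵥ (Lp *ᵥ b) = r := by
    rw [hLLpb, hr, dotProduct_comm]
  have hrpos : 0 < r := by
    rcases lt_or_eq_of_le (hy0 ▸ aux_quad hL (Lp *ᵥ b)) with h | h
    · exact h
    · exfalso
      have hLy0 : L *ᵥ (Lp *ᵥ b) = 0 := aux_ker hL _ (by rw [hy0, ← h])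
      exact hbne (by rw [← hLLpb, hLy0])
  constructor
  · -- PSD → w r ≤ 1
    intro hpsd
    have h0 := aux_quad hpsd (Lp *ᵥ b)
    rw [hquadform, hy0, ← hr] at h0
    nlinarith
  · -- w r ≤ 1 → PSD
    intro hwr
    refine PosSemidef.of_dotProduct_mulVec_nonneg ?_ ?_
    · -- Hermitian
      have hv : (w • vecMulVec b b).IsHermitian := by
        ext i j
        simp [conjTranspose_apply, vecMulVec_apply, mul_comm]
      exact hL.1.sub hv
    · intro x
      have : star x = x := by simp
      rw [this, hquadform]
      -- b ⬝ x = (Lp b) ⬝ L x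
      have hbx : b ⬝ᵥ x = (Lp *ᵥ b) ⬝ᵥ L *ᵥ x := by
        conv_lhs => rw [← hLLpb]
        rw [dotProduct_comm, aux_dot, hLsym, dotProduct_comm]
      have hcs := aux_cs hL (Lp *ᵥ b) x
      rw [hy0] at hcs
      have hxLx := aux_quad hL x
      rw [hbx]
      nlinarith
end

section
/- Let n ≥ 2 and let L be a real symmetric positive semidefinite n×n matrix with L·𝟙 = 0 whose kernel is exactly the span of 𝟙 (i.e., L·x = 0 implies x is a scalar multiple of 𝟙). Let L⁺ be an n×n real matrix satisfying L·L⁺·L = L, L⁺·L·L⁺ = L⁺, (L·L⁺)ᵀ = L·L⁺, (L⁺·L)ᵀ = L⁺·L. Let i ≠ j be two indices and set E = e_i − e_j (a single port). Then for every real γ > 0, the matrix γ·L − E·Eᵀ is positive semidefinite if and only if γ ≥ R_ij, where R_ij = (e_i − e_j)ᵀ·L⁺·(e_i − e_j) is the effective resistance between nodes i and j. In particular, the smallest γ > 0 for which the LMI γ·L − E·Eᵀ ⪰ 0 holds (which is the induced L₂-gain / H∞-norm of the single-port network ẋ = −L x + E d, y = Eᵀ x) equals the effective resistance R_ij. -/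
open Matrix

section Aux
variable {n : ℕ}

lemma vecMulVec_mulVec' (u v x : Fin n → ℝ) :
    vecMulVec u v *ᵥ x = (v ⬝ᵥ x) • u := by
  funext k
  simp [mulVec, vecMulVec_apply, dotProduct, Finset.mul_sum, Pi.smul_apply, smul_eq_mul,
    Finset.sum_mul, mul_comm, mul_left_comm]

lemma vecMulVec_transpose' (u v : Fin n → ℝ) :
    (vecMulVec u v)ᵀ = vecMulVec v u := by
  ext k l
  simp [vecMulVec_apply, transpose_apply, mul_comm]

/-- Cauchy–Schwarz for a PSD real matrix. -/
lemma psd_cauchy_schwarz_s4 {M : Matrix (Fin n) (Fin n) ℝ} (hM : M.PosSemidef)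
    (x y : Fin n → ℝ) :
    (x ⬝ᵥ M *ᵥ y) ^ 2 ≤ (x ⬝ᵥ M *ᵥ x) * (y ⬝ᵥ M *ᵥ y) := by
  have hMt : Mᵀ = M := (conjTranspose_eq_transpose_of_trivial M) ▸ hM.1
  have hsym : ∀ a b : Fin n → ℝ, a ⬝ᵥ M *ᵥ b = b ⬝ᵥ M *ᵥ a := by
    intro a b
    rw [dotProduct_mulVec, ← mulVec_transpose, hMt, dotProduct_comm]
  have key : ∀ t : ℝ, 0 ≤ (y ⬝ᵥ M *ᵥ y) * (t * t) + (2 * (x ⬝ᵥ M *ᵥ y)) * t + (x ⬝ᵥ M *ᵥ x) := by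
    intro t
    have h0 := hM.dotProduct_mulVec_nonneg (x + t • y)
    simp only [star_trivial] at h0
    have hx : M *ᵥ (x + t • y) = M *ᵥ x + t • (M *ᵥ y) := by
      rw [mulVec_add, mulVec_smul]
    rw [hx] at h0
    have hexp : (x + t • y) ⬝ᵥ (M *ᵥ x + t • (M *ᵥ y))
        = (x ⬝ᵥ M *ᵥ x) + t * (x ⬝ᵥ M *ᵥ y) + t * (y ⬝ᵥ M *ᵥ x) + t * t * (y ⬝ᵥ M *ᵥ y) := by
      simp only [add_dotProduct, dotProduct_add, smul_dotProduct, dotProduct_smul, smul_eq_mul]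
      ring
    rw [hexp, hsym y x] at h0
    nlinarith [h0]
  have hd := discrim_le_zero key
  rw [discrim] at hd
  nlinarith [hd]

end Aux

/-- Theorem 3 of the paper: for a connected-graph Laplacian `L` (symmetric PSD,
`L·𝟙 = 0`, kernel exactly `span{𝟙}`) with Moore–Penrose pseudoinverse `Lp`, a single port
`E = e_i − e_j` (`i ≠ j`), and the effective resistance `R_ij = (e_i−e_j)ᵀ·Lp·(e_i−e_j)`:
for every `γ > 0`, `γ·L − E·Eᵀ ⪰ 0` iff `γ ≥ R_ij`; in particular the smallest `γ > 0`
for which the LMI holds (the H∞-norm of the single-port network) equals `R_ij`. -/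
theorem hinf_norm_eq_effective_resistance {n : ℕ} (hn : 2 ≤ n)
    (L : Matrix (Fin n) (Fin n) ℝ) (hL : L.PosSemidef)
    (hL1 : L *ᵥ (fun _ => (1 : ℝ)) = 0)
    (hker : ∀ x : Fin n → ℝ, L *ᵥ x = 0 → ∃ c : ℝ, x = c • (fun _ => (1 : ℝ)))
    (Lp : Matrix (Fin n) (Fin n) ℝ)
    (h1 : L * Lp * L = L) (h2 : Lp * L * Lp = Lp)
    (h3 : (L * Lp)ᵀ = L * Lp) (h4 : (Lp * L)ᵀ = Lp * L)
    (i j : Fin n) (hij : i ≠ j) :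
    (∀ γ : ℝ, 0 < γ →
      ((γ • L - vecMulVec (Pi.single i 1 - Pi.single j 1)
          (Pi.single i 1 - Pi.single j 1)).PosSemidef ↔
        γ ≥ (Pi.single i 1 - Pi.single j 1) ⬝ᵥ (Lp *ᵥ (Pi.single i 1 - Pi.single j 1)))) ∧
    IsLeast {γ : ℝ | 0 < γ ∧
        (γ • L - vecMulVec (Pi.single i 1 - Pi.single j 1)
          (Pi.single i 1 - Pi.single j 1)).PosSemidef}
      ((Pi.single i 1 - Pi.single j 1) ⬝ᵥ (Lp *ᵥ (Pi.single i 1 - Pi.single j 1))) := by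
  have hLt : Lᵀ = L := (conjTranspose_eq_transpose_of_trivial L) ▸ hL.1
  set e : Fin n → ℝ := Pi.single i 1 - Pi.single j 1 with he
  set A := Lp with hAdef
  set B := Lpᵀ with hBdef
  -- basic transpose identities
  have hLB : L * B = A * L := by
    calc L * B = Lᵀ * Lpᵀ := by rw [hLt]
    _ = (Lp * L)ᵀ := by rw [transpose_mul]
    _ = A * L := h4
  have hBL : B * L = L * A := by
    calc B * L = Lpᵀ * Lᵀ := by rw [hLt]
    _ = (L * Lp)ᵀ := by rw [transpose_mul]
    _ = L * A := h3
  have hB1 : L * B * L = L := by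
    have := congrArg transpose h1
    rwa [transpose_mul, transpose_mul, hLt, ← mul_assoc] at this
  have hB2 : B * L * B = B := by
    have := congrArg transpose h2
    rwa [transpose_mul, transpose_mul, hLt, ← mul_assoc] at this
  -- uniqueness of the Moore–Penrose inverse: Lp is symmetric
  have hLALB : L * A = L * B := by
    have step : L * A = (L * B) * (L * A) := by
      calc L * A = (L * B * L) * A := by rw [hB1]
      _ = (L * B) * (L * A) := by noncomm_ring
    have hLAsym : (L * A)ᵀ = L * A := h3
    have hLBsym : (L * B)ᵀ = L * B := by rw [hLB, h4]
    calc L * A = (L * A)ᵀ := hLAsym.symm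
    _ = ((L * B) * (L * A))ᵀ := by rw [← step]
    _ = (L * A)ᵀ * (L * B)ᵀ := by rw [transpose_mul]
    _ = (L * A) * (L * B) := by rw [hLAsym, hLBsym]
    _ = (L * A * L) * B := by noncomm_ring
    _ = L * B := by rw [h1]
  have hALBL : A * L = B * L := by
    have step : A * L = (A * L) * (B * L) := by
      calc A * L = A * (L * B * L) := by rw [hB1]
      _ = (A * L) * (B * L) := by noncomm_ring
    have hALsym : (A * L)ᵀ = A * L := h4
    have hBLsym : (B * L)ᵀ = B * L := by rw [hBL, h3]
    calc A * L = (A * L)ᵀ := hALsym.symm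
    _ = ((A * L) * (B * L))ᵀ := by rw [← step]
    _ = (B * L)ᵀ * (A * L)ᵀ := by rw [transpose_mul]
    _ = (B * L) * (A * L) := by rw [hALsym, hBLsym]
    _ = B * (L * A * L) := by noncomm_ring
    _ = B * L := by rw [h1]
  have hLpsym : Lpᵀ = Lp := by
    show B = A
    calc B = B * L * B := hB2.symm
    _ = B * (L * B) := by noncomm_ring
    _ = B * (L * A) := by rw [hLALB]
    _ = (B * L) * A := by noncomm_ring
    _ = (A * L) * A := by rw [← hALBL]
    _ = A := h2
  -- e sums to zero
  have hesum : (fun _ => (1 : ℝ)) ⬝ᵥ e = 0 := by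
    simp [he, dotProduct_sub, dotProduct, Pi.single_apply]
  -- projection: L * Lp fixes e
  have hcomm : L * Lp = Lp * L := by
    have : (Lp * L)ᵀ = L * Lp := by rw [transpose_mul, hLpsym, hLt]
    rw [← this, h4]
  set u : Fin n → ℝ := Lp *ᵥ e with hu
  have hLu : L *ᵥ u = e := by
    have hw : L *ᵥ (e - (Lp * L) *ᵥ e) = 0 := by
      have : L *ᵥ ((Lp * L) *ᵥ e) = L *ᵥ e := by
        rw [mulVec_mulVec, ← mul_assoc, h1]
      rw [mulVec_sub, this, sub_self]
    obtain ⟨c, hc⟩ := hker _ hw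
    have hsum : (fun _ => (1 : ℝ)) ⬝ᵥ (e - (Lp * L) *ᵥ e) = 0 := by
      rw [dotProduct_sub, hesum, zero_sub, neg_eq_zero,
        dotProduct_mulVec, ← mulVec_transpose, h4]
      rw [show (Lp * L) *ᵥ (fun _ => (1:ℝ)) = Lp *ᵥ (L *ᵥ fun _ => (1:ℝ)) from
        (mulVec_mulVec _ _ _).symm, hL1, mulVec_zero, zero_dotProduct]
    rw [hc] at hsum
    have hcn : c * n = 0 := by
      simpa [dotProduct, Finset.mul_sum, mul_comm] using hsum
    have hc0 : c = 0 := by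
      rcases mul_eq_zero.mp hcn with h | h
      · exact h
      · exact absurd h (Nat.cast_ne_zero.mpr (by omega))
    have hzero : e - (Lp * L) *ᵥ e = 0 := by rw [hc, hc0]; simp
    have hfix : (Lp * L) *ᵥ e = e := (sub_eq_zero.mp hzero).symm
    show L *ᵥ (Lp *ᵥ e) = e
    rw [mulVec_mulVec, hcomm, hfix]
  -- symmetry of quadratic form
  have hsymL : ∀ a b : Fin n → ℝ, a ⬝ᵥ L *ᵥ b = b ⬝ᵥ L *ᵥ a := by
    intro a b
    rw [dotProduct_mulVec, ← mulVec_transpose, hLt, dotProduct_comm]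
  -- the effective resistance
  have hR : u ⬝ᵥ (L *ᵥ u) = e ⬝ᵥ u := by rw [hLu, dotProduct_comm]
  have hee : e ⬝ᵥ e = 2 := by
    simp only [he, dotProduct_sub, sub_dotProduct, single_dotProduct, Pi.sub_apply,
      Pi.single_eq_same, Pi.single_eq_of_ne hij, Pi.single_eq_of_ne hij.symm]
    norm_num
  have heLu : e ⬝ᵥ (L *ᵥ u) = 2 := by rw [hLu, hee]
  have hRpos : 0 < e ⬝ᵥ u := by
    have hcs := psd_cauchy_schwarz_s4 hL e u
    rw [heLu, hR] at hcs
    have h1' := hL.dotProduct_mulVec_nonneg e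
    simp only [star_trivial] at h1'
    nlinarith
  -- quadratic form of the LMI matrix
  have hquad : ∀ (γ : ℝ) (x : Fin n → ℝ),
      x ⬝ᵥ ((γ • L - vecMulVec e e) *ᵥ x) = γ * (x ⬝ᵥ L *ᵥ x) - (e ⬝ᵥ x) ^ 2 := by
    intro γ x
    rw [sub_mulVec, dotProduct_sub, vecMulVec_mulVec', smul_mulVec,
      dotProduct_smul, dotProduct_smul]
    simp only [smul_eq_mul]
    rw [dotProduct_comm x e]
    ring
  have hHerm : ∀ γ : ℝ, (γ • L - vecMulVec e e).IsHermitian := by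
    intro γ
    show (γ • L - vecMulVec e e)ᴴ = _
    rw [conjTranspose_eq_transpose_of_trivial, transpose_sub, transpose_smul, hLt,
      vecMulVec_transpose']
  -- the main equivalence
  have hiff : ∀ γ : ℝ, 0 < γ →
      ((γ • L - vecMulVec e e).PosSemidef ↔ γ ≥ e ⬝ᵥ u) := by
    intro γ _
    constructor
    · intro hpsd
      have h0 := hpsd.dotProduct_mulVec_nonneg u
      simp only [star_trivial] at h0
      rw [hquad γ u] at h0
      have : u ⬝ᵥ L *ᵥ u = e ⬝ᵥ u := hR
      rw [this] at h0
      nlinarith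
    · intro hγ
      refine PosSemidef.of_dotProduct_mulVec_nonneg (hHerm γ) fun x => ?_
      simp only [star_trivial]
      rw [hquad γ x]
      have hex : e ⬝ᵥ x = u ⬝ᵥ L *ᵥ x := by
        rw [← hLu, dotProduct_comm, hsymL]
      have hcs := psd_cauchy_schwarz_s4 hL u x
      rw [hR] at hcs
      have hxx := hL.dotProduct_mulVec_nonneg x
      simp only [star_trivial] at hxx
      rw [hex]
      nlinarith
  refine ⟨hiff, ⟨⟨hRpos, (hiff _ hRpos).mpr le_rfl⟩, fun γ hγ => (hiff γ hγ.1).mp hγ.2⟩⟩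
end

section
/- Let n be a positive integer, let L be a real symmetric positive definite n×n matrix, and let ω be a real number. Let L_ℂ denote the complex matrix obtained from L by mapping each real entry into ℂ, and let M = L_ℂ + (ω·i)·I_n. Then M is invertible, and for every vector x ∈ ℂⁿ, the complex modulus of the quadratic form x̄ᵀ·M⁻¹·x is at most the (real, nonnegative) quadratic form x̄ᵀ·(L_ℂ)⁻¹·x, i.e., |x̄ᵀ·(L_ℂ + iω·I)⁻¹·x| ≤ x̄ᵀ·L_ℂ⁻¹·x. -/
open Matrix

section helpers
variable {n : ℕ}

lemma quad_diag (U : Matrix (Fin n) (Fin n) ℂ) (d : Fin n → ℂ) (x : Fin n → ℂ) :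
    star x ⬝ᵥ ((U * diagonal d * star U) *ᵥ x)
      = ∑ j, d j * ((Complex.normSq ((star U *ᵥ x) j) : ℝ) : ℂ) := by
  set y := star U *ᵥ x with hy
  have h1 : star x ᵥ* U = star y := by
    rw [hy, star_mulVec, star_eq_conjTranspose, conjTranspose_conjTranspose]
  rw [dotProduct_mulVec, ← vecMul_vecMul, ← vecMul_vecMul, h1, ← dotProduct_mulVec, ← hy]
  simp only [dotProduct, vecMul_diagonal, Pi.star_apply, RingHom.id_apply]
  refine Finset.sum_congr rfl fun j _ => ?_
  rw [Complex.normSq_eq_conj_mul_self]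
  simp only [RCLike.star_def]
  ring

lemma diag_inv_conj (U : Matrix (Fin n) (Fin n) ℂ) (hU1 : U * star U = 1)
    (hU2 : star U * U = 1) (d : Fin n → ℂ) (hd : ∀ j, d j ≠ 0) :
    (U * diagonal d * star U)⁻¹ = U * diagonal (fun j => (d j)⁻¹) * star U := by
  apply inv_eq_right_inv
  calc U * diagonal d * star U * (U * diagonal (fun j => (d j)⁻¹) * star U)
      = U * (diagonal d * (star U * U) * diagonal (fun j => (d j)⁻¹)) * star U := by
        simp only [Matrix.mul_assoc]
    _ = 1 := by
        rw [hU2, Matrix.mul_one, diagonal_mul_diagonal]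
        have : (fun j => d j * (d j)⁻¹) = fun _ => (1:ℂ) := by
          funext j; exact mul_inv_cancel₀ (hd j)
        rw [this, diagonal_one, Matrix.mul_one, hU1]

end helpers

/-- for `L` real symmetric positive definite and `ω : ℝ`, the complex matrix
`M = L_ℂ + (ω·i)·I` is invertible and for every `x : ℂⁿ`,
`|x̄ᵀ·M⁻¹·x| ≤ x̄ᵀ·L_ℂ⁻¹·x` (the right-hand side being real and nonnegative). -/
theorem quadratic_form_resolvent_bound {n : ℕ} (hn : 0 < n)
    (L : Matrix (Fin n) (Fin n) ℝ) (hL : L.PosDef) (ω : ℝ) :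
    IsUnit (L.map ((↑) : ℝ → ℂ) + ((ω : ℂ) * Complex.I) • (1 : Matrix (Fin n) (Fin n) ℂ)) ∧
      ∀ x : Fin n → ℂ,
        ‖(star x ⬝ᵥ
            ((L.map ((↑) : ℝ → ℂ) + ((ω : ℂ) * Complex.I) • (1 : Matrix (Fin n) (Fin n) ℂ))⁻¹
              *ᵥ x))‖ ≤
          (star x ⬝ᵥ ((L.map ((↑) : ℝ → ℂ))⁻¹ *ᵥ x)).re := by
  classical
  have hH := hL.1
  set V : Matrix (Fin n) (Fin n) ℝ := (hH.eigenvectorUnitary : Matrix (Fin n) (Fin n) ℝ) with hV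
  set lam : Fin n → ℝ := hH.eigenvalues with hlamdef
  have hlam : ∀ j, 0 < lam j := hL.eigenvalues_pos
  have hspec : L = V * diagonal (RCLike.ofReal ∘ lam) * star V := hH.spectral_theorem
  set f : ℝ →+* ℂ := Complex.ofRealHom with hf
  set U : Matrix (Fin n) (Fin n) ℂ := V.map f with hUdef
  have hstarU : star U = (star V).map f := by
    rw [star_eq_conjTranspose, star_eq_conjTranspose, hUdef,
      conjTranspose_map f (fun a => by simp [hf])]
  have hU1 : U * star U = 1 := by
    rw [hstarU, hUdef, ← Matrix.map_mul, mem_unitaryGroup_iff.mp hH.eigenvectorUnitary.2]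
    simp
  have hU2 : star U * U = 1 := by
    rw [hstarU, hUdef, ← Matrix.map_mul, mem_unitaryGroup_iff'.mp hH.eigenvectorUnitary.2]
    simp
  set c : Fin n → ℂ := fun j => ((lam j : ℝ) : ℂ) with hc
  have hA : L.map ((↑) : ℝ → ℂ) = U * diagonal c * star U := by
    show L.map f = _
    rw [hspec, Matrix.map_mul, Matrix.map_mul, hstarU, hUdef, diagonal_map (by simp)]
    rfl
  set d : Fin n → ℂ := fun j => c j + (ω : ℂ) * Complex.I with hd
  have hM : L.map ((↑) : ℝ → ℂ) + ((ω : ℂ) * Complex.I) • (1 : Matrix (Fin n) (Fin n) ℂ)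
      = U * diagonal d * star U := by
    have hdg : diagonal d = diagonal c + ((ω : ℂ) * Complex.I) • (1 : Matrix (Fin n) (Fin n) ℂ) := by
      ext i j
      by_cases h : i = j <;>
        simp [h, diagonal_apply, Matrix.one_apply, hd]
    rw [hA, hdg, Matrix.mul_add, Matrix.add_mul, Matrix.mul_smul, Matrix.smul_mul,
      Matrix.mul_one, hU1]
  have hcne : ∀ j, c j ≠ 0 := fun j => by
    simp only [hc, ne_eq, Complex.ofReal_eq_zero]
    exact (hlam j).ne'
  have hdne : ∀ j, d j ≠ 0 := fun j h => by
    have := congrArg Complex.re h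
    simp [hd, hc] at this
    exact (hlam j).ne' this
  constructor
  · rw [hM]
    have hUu : IsUnit U := ⟨⟨U, star U, hU1, hU2⟩, rfl⟩
    have hUsu : IsUnit (star U) := ⟨⟨star U, U, hU2, hU1⟩, rfl⟩
    have hdu : IsUnit d :=
      ⟨⟨d, fun j => (d j)⁻¹, funext fun j => mul_inv_cancel₀ (hdne j),
        funext fun j => inv_mul_cancel₀ (hdne j)⟩, rfl⟩
    exact (hUu.mul (isUnit_diagonal.mpr hdu)).mul hUsu
  · intro x
    rw [hM, hA, diag_inv_conj U hU1 hU2 d hdne, diag_inv_conj U hU1 hU2 c hcne,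
      quad_diag, quad_diag]
    set y : Fin n → ℂ := star U *ᵥ x with hy
    have hre : (∑ j, (c j)⁻¹ * ((Complex.normSq (y j) : ℝ) : ℂ)).re
        = ∑ j, (lam j)⁻¹ * Complex.normSq (y j) := by
      rw [Complex.re_sum]
      refine Finset.sum_congr rfl fun j _ => ?_
      simp [hc, ← Complex.ofReal_inv, ← Complex.ofReal_mul]
    rw [hre]
    calc ‖∑ j, (d j)⁻¹ * ((Complex.normSq (y j) : ℝ) : ℂ)‖
        ≤ ∑ j, ‖(d j)⁻¹ * ((Complex.normSq (y j) : ℝ) : ℂ)‖ :=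
          norm_sum_le _ _
      _ ≤ ∑ j, (lam j)⁻¹ * Complex.normSq (y j) := by
          refine Finset.sum_le_sum fun j _ => ?_
          rw [norm_mul, norm_inv, Complex.norm_real, Real.norm_eq_abs,
            abs_of_nonneg (Complex.normSq_nonneg _)]
          refine mul_le_mul_of_nonneg_right ?_ (Complex.normSq_nonneg _)
          refine inv_anti₀ (hlam j) ?_
          have h1 : (d j).re = lam j := by simp [hd, hc]
          calc lam j = (d j).re := h1.symm
            _ ≤ ‖d j‖ := Complex.re_le_norm _
end
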